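/- Fix integers n ≥ 2 and 1 ≤ i < n. The number of permutations π̂ of {1, …, n} with the following property — under the Ranking greedy process on MonotoneG with π̂, the vertex of rank i is matched, say to u_j, and the vertex of rank i+1 under π̂ is v_j (for that same index j) — equals a(n−1, i). -/

import Mathlib

open scoped Classical

noncomputable section

/-- The element of `c` minimizing `key`, if `c` is nonempty. -/
def pickMin {n : ℕ} {α : Type*} [LinearOrder α] (key : Fin n → α)
    (c : Finset (Fin n)) : Option (Fin n) :=
  if h : c.Nonempty then some (Classical.choose (Finset.exists_min_image c key h)) else none

/-- The set of matched `V`-vertices after the first `j` arrivals of the online greedy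
process on the bipartite graph with `U`-side arrival order `u_0, u_1, …` and adjacency
`adj`, in which each arriving `u_j` is matched to its currently unmatched neighbor
minimizing `key` (if any). -/
def greedyRun {n : ℕ} {α : Type*} [LinearOrder α] (adj : ℕ → Fin n → Prop)
    (key : Fin n → α) : ℕ → Finset (Fin n)
  | 0 => ∅
  | j + 1 =>
    match pickMin key ((Finset.univ.filter fun i => adj j i) \ greedyRun adj key j) with
    | some v => insert v (greedyRun adj key j)
    | none => greedyRun adj key j

/-- The `V`-vertex that the arriving vertex `u_j` (0-indexed) gets matched to, if any. -/
def greedyMatchU {n : ℕ} {α : Type*} [LinearOrder α] (adj : ℕ → Fin n → Prop)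
    (key : Fin n → α) (j : ℕ) : Option (Fin n) :=
  pickMin key ((Finset.univ.filter fun i => adj j i) \ greedyRun adj key j)

/-- Adjacency of the monotone graph `MonotoneG` (0-indexed):
`u_j` is adjacent to `v_i` iff `j ≤ i`. -/
def monoAdj (n : ℕ) : ℕ → Fin n → Prop := fun j i => j ≤ (i : ℕ)

/-- The set of matched `V`-vertices produced by the Ranking greedy process on `MonotoneG`
with permutation `π` (where `π i` is the rank of `v_i`, 0-indexed). -/
def rankMatched (n : ℕ) (π : Equiv.Perm (Fin n)) : Finset (Fin n) :=
  greedyRun (monoAdj n) (fun i => π i) n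

/-- `x(π)`: the number of edges of the matching produced by Ranking on `MonotoneG`. -/
def xSize (n : ℕ) (π : Equiv.Perm (Fin n)) : ℕ := (rankMatched n π).card

/-- `a(n) = Σ_π x(π)`, over all `n!` permutations. -/
def aVal (n : ℕ) : ℕ := ∑ π : Equiv.Perm (Fin n), xSize n π

/-- `a(n,i)` (with `i` 1-indexed): the number of permutations `π` of `{1,…,n}` for which
the vertex of rank `i` under `π` is matched by the Ranking greedy process on `MonotoneG`. -/
def aIdx (n i : ℕ) : ℕ :=
  (Finset.univ.filter fun π : Equiv.Perm (Fin n) =>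
    ∃ v : Fin n, (π v : ℕ) = i - 1 ∧ v ∈ rankMatched n π).card

/-- `d(m,i)` (with `i` 1-indexed): the number of permutations of `{1,…,m}` all of whose
fixed points (if any) lie among the first `i` items. -/
def dIdx (m i : ℕ) : ℕ :=
  (Finset.univ.filter fun σ : Equiv.Perm (Fin m) => ∀ x, σ x = x → (x : ℕ) < i).card

/-- `d(m)`: the number of derangements of `{1,…,m}`. -/
def numDer (m : ℕ) : ℕ :=
  (Finset.univ.filter fun σ : Equiv.Perm (Fin m) => ∀ x, σ x ≠ x).card

/-- The key for the greedy-by-price process: buy the cheapest available item,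
breaking ties in favor of the smaller index. -/
def priceKey {n : ℕ} (p : Fin n → ℝ) : Fin n → Lex (ℝ × ℕ) := fun i => toLex (p i, (i : ℕ))

/-- The utility `y(u_j)` of buyer `u_j` (0-indexed) in the greedy-by-price process:
`1 - p v` if `u_j` buys item `v`, and `0` if `u_j` remains unmatched. -/
def utility (n : ℕ) (adj : ℕ → Fin n → Prop) (p : Fin n → ℝ) (j : ℕ) : ℝ :=
  (greedyMatchU adj (priceKey p) j).elim 0 (fun v => 1 - p v)

/-- The revenue `r(v)` from item `v` in the greedy-by-price process:
`p v` if `v` is sold, and `0` otherwise. -/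
def revenue (n : ℕ) (adj : ℕ → Fin n → Prop) (p : Fin n → ℝ) (v : Fin n) : ℝ :=
  if v ∈ greedyRun adj (priceKey p) n then p v else 0

/-- The `m`-th harmonic number `H_m = Σ_{i=1}^m 1/i` (with `H_0 = 0`). -/
def harm (m : ℕ) : ℝ := ∑ i ∈ Finset.range m, (1 : ℝ) / (i + 1)

section Helpers

variable {N : ℕ} {α : Type*} [LinearOrder α] {key : Fin N → α} {adj : ℕ → Fin N → Prop}

lemma pickMin_spec {c : Finset (Fin N)} {v : Fin N} (h : pickMin key c = some v) :
    v ∈ c ∧ ∀ u ∈ c, key v ≤ key u := by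
  unfold pickMin at h
  split_ifs at h with hc
  · obtain ⟨h1, h2⟩ := Classical.choose_spec (Finset.exists_min_image c key hc)
    injection h with h
    subst h; exact ⟨h1, h2⟩

lemma pickMin_eq_some (hkey : Function.Injective key) {c : Finset (Fin N)} {v : Fin N}
    (hv : v ∈ c) (hmin : ∀ u ∈ c, key v ≤ key u) : pickMin key c = some v := by
  unfold pickMin
  rw [dif_pos ⟨v, hv⟩]
  obtain ⟨h1, h2⟩ := Classical.choose_spec (Finset.exists_min_image c key ⟨v, hv⟩)
  exact congrArg some (hkey (le_antisymm (h2 v hv) (hmin _ h1)))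

lemma pickMin_of_nonempty {c : Finset (Fin N)} (hc : c.Nonempty) :
    ∃ v, pickMin key c = some v := by
  unfold pickMin; rw [dif_pos hc]; exact ⟨_, rfl⟩

lemma greedyRun_succ_some {j : ℕ} {v : Fin N} (h : greedyMatchU adj key j = some v) :
    greedyRun adj key (j + 1) = insert v (greedyRun adj key j) := by
  unfold greedyMatchU at h
  rw [greedyRun, h]

lemma greedyRun_succ_none {j : ℕ} (h : greedyMatchU adj key j = none) :
    greedyRun adj key (j + 1) = greedyRun adj key j := by
  unfold greedyMatchU at h
  rw [greedyRun, h]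

lemma greedyRun_subset_succ (j : ℕ) :
    greedyRun adj key j ⊆ greedyRun adj key (j + 1) := by
  rcases h : greedyMatchU adj key j with _ | v
  · rw [greedyRun_succ_none h]
  · rw [greedyRun_succ_some h]; exact Finset.subset_insert _ _

lemma greedyRun_mono {t t' : ℕ} (h : t ≤ t') :
    greedyRun adj key t ⊆ greedyRun adj key t' := by
  induction t' with
  | zero => simp [Nat.le_zero.mp h]
  | succ t' ih =>
    rcases Nat.lt_or_ge t (t' + 1) with h' | h'
    · exact (ih (by omega)).trans (greedyRun_subset_succ t')
    · have : t = t' + 1 := by omega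
      subst this; exact Finset.Subset.refl _

lemma exists_matchU {t : ℕ} {v : Fin N} (h : v ∈ greedyRun adj key t) :
    ∃ s < t, greedyMatchU adj key s = some v := by
  induction t with
  | zero => simp [greedyRun] at h
  | succ t ih =>
    rcases hm : greedyMatchU adj key t with _ | u
    · rw [greedyRun_succ_none hm] at h
      obtain ⟨s, hs, h2⟩ := ih h; exact ⟨s, by omega, h2⟩
    · rw [greedyRun_succ_some hm] at h
      rcases Finset.mem_insert.mp h with h | h
      · exact ⟨t, by omega, h ▸ hm⟩
      · obtain ⟨s, hs, h2⟩ := ih h; exact ⟨s, by omega, h2⟩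

lemma matchU_spec {j : ℕ} {v : Fin N} (h : greedyMatchU adj key j = some v) :
    adj j v ∧ v ∉ greedyRun adj key j ∧
      ∀ u, adj j u → u ∉ greedyRun adj key j → key v ≤ key u := by
  obtain ⟨h1, h2⟩ := pickMin_spec h
  rw [Finset.mem_sdiff, Finset.mem_filter] at h1
  refine ⟨h1.1.2, h1.2, fun u hu hu' => h2 u ?_⟩
  rw [Finset.mem_sdiff, Finset.mem_filter]
  exact ⟨⟨Finset.mem_univ u, hu⟩, hu'⟩

lemma matchU_eq_pickMin (adj : ℕ → Fin N → Prop) (key : Fin N → α) (j : ℕ) :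
    greedyMatchU adj key j =
      pickMin key ((Finset.univ.filter fun i => adj j i) \ greedyRun adj key j) := rfl

lemma matchU_unique {s s' : ℕ} {v : Fin N} (h : greedyMatchU adj key s = some v)
    (h' : greedyMatchU adj key s' = some v) : s = s' := by
  by_contra hne
  rcases Nat.lt_or_ge s s' with hlt | hge
  · have : v ∈ greedyRun adj key s' :=
      greedyRun_mono hlt (greedyRun_succ_some h ▸ Finset.mem_insert_self v _)
    exact (matchU_spec h').2.1 this
  · have hlt : s' < s := by omega
    have : v ∈ greedyRun adj key s :=
      greedyRun_mono hlt (greedyRun_succ_some h' ▸ Finset.mem_insert_self v _)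
    exact (matchU_spec h).2.1 this

end Helpers

section Main

variable {m : ℕ}

def mkP (σ : Equiv.Perm (Fin m)) (jF iF : Fin (m + 1)) : Equiv.Perm (Fin (m + 1)) :=
  (finSuccEquiv' jF).trans ((Equiv.optionCongr σ).trans (finSuccEquiv' iF).symm)

lemma mkP_apply_jF (σ : Equiv.Perm (Fin m)) (jF iF : Fin (m + 1)) : mkP σ jF iF jF = iF := by
  simp [mkP, finSuccEquiv'_at, finSuccEquiv'_symm_none, Equiv.optionCongr]

lemma mkP_apply_succAbove (σ : Equiv.Perm (Fin m)) (jF iF : Fin (m + 1)) (k : Fin m) :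
    mkP σ jF iF (jF.succAbove k) = iF.succAbove (σ k) := by
  simp [mkP, finSuccEquiv'_succAbove, finSuccEquiv'_symm_some, Equiv.optionCongr]

lemma mkP_symm_iF (σ : Equiv.Perm (Fin m)) (jF iF : Fin (m + 1)) :
    (mkP σ jF iF).symm iF = jF := by
  rw [Equiv.symm_apply_eq, mkP_apply_jF]

def delP (π : Equiv.Perm (Fin (m + 1))) (iF : Fin (m + 1)) : Equiv.Perm (Fin m) :=
  Equiv.removeNone (((finSuccEquiv' (π.symm iF)).symm).trans (π.trans (finSuccEquiv' iF)))

lemma delP_spec (π : Equiv.Perm (Fin (m + 1))) (iF : Fin (m + 1)) (k : Fin m) :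
    π ((π.symm iF).succAbove k) = iF.succAbove (delP π iF k) := by
  set jF := π.symm iF with hj
  have hπj : π jF = iF := π.apply_symm_apply iF
  set e := ((finSuccEquiv' jF).symm).trans (π.trans (finSuccEquiv' iF)) with he
  have hesk : e (some k) = finSuccEquiv' iF (π (jF.succAbove k)) := by
    simp [he, finSuccEquiv'_symm_some]
  have hex : ∃ l, e (some k) = some l := by
    rcases hl : e (some k) with _ | l
    · exfalso
      rw [hesk] at hl
      have h2 : π (jF.succAbove k) = iF := by
        have := congrArg (finSuccEquiv' iF).symm hl
        simpa [finSuccEquiv'_symm_none] using this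
      exact Fin.succAbove_ne jF k (π.injective (h2.trans hπj.symm))
    · exact ⟨l, rfl⟩
  have h2 : some (delP π iF k) = e (some k) := Equiv.removeNone_some e hex
  rw [hesk] at h2
  have h3 := congrArg (finSuccEquiv' iF).symm h2.symm
  simpa [finSuccEquiv'_symm_some] using h3

lemma mkP_delP (π : Equiv.Perm (Fin (m + 1))) (iF : Fin (m + 1)) :
    mkP (delP π iF) (π.symm iF) iF = π := by
  apply Equiv.ext; intro v
  by_cases hv : v = π.symm iF
  · subst hv
    rw [mkP_apply_jF, Equiv.apply_symm_apply]
  · obtain ⟨k, hk⟩ := Fin.exists_succAbove_eq hv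
    rw [← hk, mkP_apply_succAbove, ← delP_spec]

lemma delP_mkP (σ : Equiv.Perm (Fin m)) (jF iF : Fin (m + 1)) :
    delP (mkP σ jF iF) iF = σ := by
  apply Equiv.ext; intro k
  have h := delP_spec (mkP σ jF iF) iF k
  rw [mkP_symm_iF, mkP_apply_succAbove] at h
  exact (Fin.succAbove_right_injective h).symm

end Main

section Run

variable {m : ℕ}

def Rs (σ : Equiv.Perm (Fin m)) (t : ℕ) : Finset (Fin m) :=
  greedyRun (monoAdj m) (fun v => σ v) t

def Rp (π : Equiv.Perm (Fin (m + 1))) (t : ℕ) : Finset (Fin (m + 1)) :=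
  greedyRun (monoAdj (m + 1)) (fun v => π v) t

def As (σ : Equiv.Perm (Fin m)) (t : ℕ) : Finset (Fin m) :=
  (Finset.univ.filter fun v => monoAdj m t v) \ Rs σ t

def Ap (π : Equiv.Perm (Fin (m + 1))) (t : ℕ) : Finset (Fin (m + 1)) :=
  (Finset.univ.filter fun v => monoAdj (m + 1) t v) \ Rp π t

lemma matchUs_eq (σ : Equiv.Perm (Fin m)) (t : ℕ) :
    greedyMatchU (monoAdj m) (fun v => σ v) t = pickMin (fun v => σ v) (As σ t) := rfl

lemma matchUp_eq (π : Equiv.Perm (Fin (m + 1))) (t : ℕ) :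
    greedyMatchU (monoAdj (m + 1)) (fun v => π v) t = pickMin (fun v => π v) (Ap π t) := rfl

lemma mem_As {σ : Equiv.Perm (Fin m)} {t : ℕ} {k : Fin m} :
    k ∈ As σ t ↔ t ≤ (k : ℕ) ∧ k ∉ Rs σ t := by
  rw [As, Finset.mem_sdiff, Finset.mem_filter]; simp [monoAdj]

lemma mem_Ap {π : Equiv.Perm (Fin (m + 1))} {t : ℕ} {v : Fin (m + 1)} :
    v ∈ Ap π t ↔ t ≤ (v : ℕ) ∧ v ∉ Rp π t := by
  rw [Ap, Finset.mem_sdiff, Finset.mem_filter]; simp [monoAdj]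

lemma coe_succAbove_le {jF : Fin (m + 1)} {t : ℕ} (ht : t ≤ (jF : ℕ)) (k : Fin m) :
    (t ≤ ((jF.succAbove k : Fin (m + 1)) : ℕ)) ↔ t ≤ (k : ℕ) := by
  rcases lt_or_ge (Fin.castSucc k) jF with h | h
  · rw [Fin.succAbove_of_castSucc_lt _ _ h]
    simp
  · rw [Fin.succAbove_of_le_castSucc _ _ h, Fin.val_succ]
    have h2 : (jF : ℕ) ≤ (k : ℕ) := by
      have := Fin.le_def.mp h
      simpa using this
    omega

lemma avail_decomp {σ : Equiv.Perm (Fin m)} {π : Equiv.Perm (Fin (m + 1))} {jF : Fin (m + 1)}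
    {t : ℕ} (ht : t ≤ (jF : ℕ)) (hrun : Rp π t = (Rs σ t).map jF.succAboveEmb) :
    Ap π t = insert jF ((As σ t).map jF.succAboveEmb) := by
  ext v
  rw [Finset.mem_insert, mem_Ap, hrun]
  by_cases hv : v = jF
  · subst hv
    simp only [true_or, iff_true]
    refine ⟨ht, fun hmem => ?_⟩
    obtain ⟨k, _, hk⟩ := Finset.mem_map.mp hmem
    exact Fin.succAbove_ne v k hk
  · obtain ⟨k, hk⟩ := Fin.exists_succAbove_eq hv
    subst hk
    constructor
    · rintro ⟨hta, hnr⟩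
      right
      refine Finset.mem_map_of_mem _ (mem_As.mpr ⟨(coe_succAbove_le ht k).mp hta, fun hc => hnr ?_⟩)
      exact Finset.mem_map_of_mem _ hc
    · rintro (heq | hmem)
      · exact absurd heq (Fin.succAbove_ne jF k)
      · obtain ⟨k', hk', hkk⟩ := Finset.mem_map.mp hmem
        have hke : k' = k := Fin.succAbove_right_injective hkk
        rw [hke] at hk'
        refine ⟨(coe_succAbove_le ht k).mpr (mem_As.mp hk').1, fun hc => (mem_As.mp hk').2 ?_⟩
        obtain ⟨k'', hk'', h''⟩ := Finset.mem_map.mp hc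
        have hke2 : k'' = k := Fin.succAbove_right_injective h''
        rwa [hke2] at hk''

lemma pick_succAbove {σ : Equiv.Perm (Fin m)} {jF iF : Fin (m + 1)} {t : ℕ} {k : Fin m}
    (ht : t ≤ (jF : ℕ))
    (hrun : Rp (mkP σ jF iF) t = (Rs σ t).map jF.succAboveEmb)
    (hk : greedyMatchU (monoAdj m) (fun v => σ v) t = some k)
    (hlt : Fin.castSucc (σ k) < iF) :
    greedyMatchU (monoAdj (m + 1)) (fun v => mkP σ jF iF v) t = some (jF.succAbove k) := by
  have hA := avail_decomp ht hrun
  rw [matchUp_eq]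
  apply pickMin_eq_some (fun a b h => (mkP σ jF iF).injective h)
  · rw [hA]
    exact Finset.mem_insert_of_mem (Finset.mem_map_of_mem _ (pickMin_spec hk).1)
  · intro u hu
    rw [hA] at hu
    rcases Finset.mem_insert.mp hu with h | hmem
    · show mkP σ jF iF (jF.succAbove k) ≤ mkP σ jF iF u
      rw [h, mkP_apply_succAbove, mkP_apply_jF, Fin.succAbove_of_castSucc_lt _ _ hlt]
      exact le_of_lt hlt
    · obtain ⟨k', hk', hkk⟩ := Finset.mem_map.mp hmem
      show mkP σ jF iF (jF.succAbove k) ≤ mkP σ jF iF u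
      rw [← hkk]
      show mkP σ jF iF (jF.succAbove k) ≤ mkP σ jF iF (jF.succAbove k')
      rw [mkP_apply_succAbove, mkP_apply_succAbove]
      exact Fin.succAbove_le_succAbove_iff.mpr ((pickMin_spec hk).2 k' hk')

lemma pick_jF {σ : Equiv.Perm (Fin m)} {jF iF : Fin (m + 1)} {t : ℕ}
    (ht : t ≤ (jF : ℕ))
    (hrun : Rp (mkP σ jF iF) t = (Rs σ t).map jF.succAboveEmb)
    (hbad : ∀ k ∈ As σ t, iF ≤ Fin.castSucc (σ k)) :
    greedyMatchU (monoAdj (m + 1)) (fun v => mkP σ jF iF v) t = some jF := by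
  have hA := avail_decomp ht hrun
  rw [matchUp_eq]
  apply pickMin_eq_some (fun a b h => (mkP σ jF iF).injective h)
  · rw [hA]; exact Finset.mem_insert_self _ _
  · intro u hu
    rw [hA] at hu
    rcases Finset.mem_insert.mp hu with h | hmem
    · show mkP σ jF iF jF ≤ mkP σ jF iF u
      rw [h]
    · obtain ⟨k', hk', hkk⟩ := Finset.mem_map.mp hmem
      show mkP σ jF iF jF ≤ mkP σ jF iF u
      rw [← hkk]
      show mkP σ jF iF jF ≤ mkP σ jF iF (jF.succAbove k')
      rw [mkP_apply_jF, mkP_apply_succAbove]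
      have h1 := hbad k' hk'
      rw [Fin.succAbove_of_le_castSucc _ _ h1]
      exact h1.trans (le_of_lt Fin.castSucc_lt_succ)

lemma runEq_core {σ : Equiv.Perm (Fin m)} {jF iF : Fin (m + 1)}
    (hgood : ∀ t, t < (jF : ℕ) → Rp (mkP σ jF iF) t = (Rs σ t).map jF.succAboveEmb →
      greedyMatchU (monoAdj (m + 1)) (fun v => mkP σ jF iF v) t ≠ some jF) :
    ∀ t, t ≤ (jF : ℕ) → Rp (mkP σ jF iF) t = (Rs σ t).map jF.succAboveEmb := by
  intro t
  induction t with
  | zero => intro _; simp [Rp, Rs, greedyRun]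
  | succ t ih =>
    intro ht1
    have htle : t ≤ (jF : ℕ) := by omega
    have htlt : t < (jF : ℕ) := by omega
    have hrun := ih htle
    rcases Finset.eq_empty_or_nonempty (As σ t) with hemp | hne
    · exact absurd (pick_jF htle hrun (fun k hk => by rw [hemp] at hk; simp at hk))
        (hgood t htlt hrun)
    · obtain ⟨k, hk⟩ := pickMin_of_nonempty (key := fun v => σ v) hne
      have hk' : greedyMatchU (monoAdj m) (fun v => σ v) t = some k := by
        rw [matchUs_eq]; exact hk
      by_cases hlt : Fin.castSucc (σ k) < iF
      · have hpick := pick_succAbove htle hrun hk' hlt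
        show greedyRun (monoAdj (m + 1)) (fun v => mkP σ jF iF v) (t + 1) = _
        rw [greedyRun_succ_some hpick,
          show Rs σ (t + 1) = insert k (Rs σ t) from greedyRun_succ_some hk',
          Finset.map_insert, ← hrun]
        rfl
      · exfalso
        apply hgood t htlt hrun
        apply pick_jF htle hrun
        intro k' hk2
        have h1 : σ k ≤ σ k' := (pickMin_spec hk).2 k' hk2
        exact (le_of_not_gt hlt).trans (Fin.castSucc_le_castSucc_iff.mpr h1)

lemma forward_G {σ : Equiv.Perm (Fin m)} {jF iF : Fin (m + 1)} {w : Fin m}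
    (hw : greedyMatchU (monoAdj m) (fun v => σ v) (jF : ℕ) = some w)
    (hlt : Fin.castSucc (σ w) < iF) :
    greedyMatchU (monoAdj (m + 1)) (fun v => mkP σ jF iF v) (jF : ℕ)
      = some (jF.succAbove w) := by
  obtain ⟨hadj, hnr, _⟩ := matchU_spec hw
  have hadj' : (jF : ℕ) ≤ (w : ℕ) := hadj
  have hgood : ∀ t, t < (jF : ℕ) → Rp (mkP σ jF iF) t = (Rs σ t).map jF.succAboveEmb →
      greedyMatchU (monoAdj (m + 1)) (fun v => mkP σ jF iF v) t ≠ some jF := by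
    intro t ht hrun' hcon
    obtain ⟨_, _, hminπ⟩ := matchU_spec hcon
    have hwa : mkP σ jF iF jF ≤ mkP σ jF iF (jF.succAbove w) := by
      apply hminπ
      · show t ≤ ((jF.succAbove w : Fin (m + 1)) : ℕ)
        rw [coe_succAbove_le (le_of_lt ht)]
        omega
      · show jF.succAbove w ∉ Rp (mkP σ jF iF) t
        rw [hrun']
        intro hc
        obtain ⟨k'', hk'', h''⟩ := Finset.mem_map.mp hc
        rw [show k'' = w from Fin.succAbove_right_injective h''] at hk''
        exact hnr (greedyRun_mono (le_of_lt ht) hk'')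
    rw [mkP_apply_jF, mkP_apply_succAbove, Fin.succAbove_of_castSucc_lt _ _ hlt] at hwa
    exact absurd hwa (not_le.mpr hlt)
  have hrun := runEq_core hgood (jF : ℕ) le_rfl
  exact pick_succAbove le_rfl hrun hw hlt

lemma backward_F {σ : Equiv.Perm (Fin m)} {jF iF v : Fin (m + 1)} {r : Fin m}
    (hlt : Fin.castSucc r < iF)
    (hm : greedyMatchU (monoAdj (m + 1)) (fun u => mkP σ jF iF u) (jF : ℕ) = some v)
    (hv : mkP σ jF iF v = Fin.castSucc r) :
    greedyMatchU (monoAdj m) (fun u => σ u) (jF : ℕ) = some (σ.symm r) := by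
  obtain ⟨hadj, hnr, hmin⟩ := matchU_spec hm
  have hadj' : (jF : ℕ) ≤ (v : ℕ) := hadj
  have hvne : v ≠ jF := by
    intro h
    rw [h, mkP_apply_jF] at hv
    exact absurd (hv ▸ hlt) (lt_irrefl _)
  have hjnr : jF ∉ Rp (mkP σ jF iF) (jF : ℕ) := by
    intro hc
    obtain ⟨s, hs, hms⟩ := exists_matchU hc
    obtain ⟨_, _, hs3⟩ := matchU_spec hms
    have h1 : mkP σ jF iF jF ≤ mkP σ jF iF v := by
      apply hs3
      · show s ≤ (v : ℕ); omega
      · exact fun hc2 => hnr (greedyRun_mono (le_of_lt hs) hc2)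
    rw [mkP_apply_jF, hv] at h1
    exact absurd (lt_of_le_of_lt h1 hlt) (lt_irrefl _)
  have hgood : ∀ t, t < (jF : ℕ) → Rp (mkP σ jF iF) t = (Rs σ t).map jF.succAboveEmb →
      greedyMatchU (monoAdj (m + 1)) (fun u => mkP σ jF iF u) t ≠ some jF := by
    intro t ht _ hcon
    exact hjnr (greedyRun_mono (show t + 1 ≤ (jF : ℕ) by omega)
      (greedyRun_succ_some hcon ▸ Finset.mem_insert_self jF _))
  have hrun := runEq_core hgood (jF : ℕ) le_rfl
  have hA := avail_decomp le_rfl hrun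
  have hvA : v ∈ Ap (mkP σ jF iF) (jF : ℕ) := mem_Ap.mpr ⟨hadj, hnr⟩
  rw [hA, Finset.mem_insert] at hvA
  rcases hvA with h | h
  · exact absurd h hvne
  obtain ⟨k, hkA, hkk⟩ := Finset.mem_map.mp h
  have hkk' : jF.succAbove k = v := hkk
  have hσk : σ k = r := by
    apply Fin.succAbove_right_injective (p := iF)
    rw [← mkP_apply_succAbove σ jF iF k, hkk', hv, Fin.succAbove_of_castSucc_lt _ _ hlt]
  have hks : greedyMatchU (monoAdj m) (fun u => σ u) (jF : ℕ) = some k := by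
    rw [matchUs_eq]
    apply pickMin_eq_some (fun a b h => σ.injective h) hkA
    intro u hu
    have h1 : mkP σ jF iF v ≤ mkP σ jF iF (jF.succAbove u) := by
      apply hmin
      · show (jF : ℕ) ≤ ((jF.succAbove u : Fin (m + 1)) : ℕ)
        rw [coe_succAbove_le le_rfl]
        exact (mem_As.mp hu).1
      · show jF.succAbove u ∉ Rp (mkP σ jF iF) (jF : ℕ)
        rw [hrun]
        intro hc
        obtain ⟨k'', hk'', h''⟩ := Finset.mem_map.mp hc
        rw [show k'' = u from Fin.succAbove_right_injective h''] at hk''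
        exact (mem_As.mp hu).2 hk''
    rw [hv, mkP_apply_succAbove] at h1
    show σ k ≤ σ u
    rw [hσk]
    by_contra hcon
    push_neg at hcon
    have h2 : Fin.castSucc (σ u) < Fin.castSucc r := Fin.castSucc_lt_castSucc_iff.mpr hcon
    rw [Fin.succAbove_of_castSucc_lt _ _ (lt_trans h2 hlt)] at h1
    exact absurd (lt_of_le_of_lt h1 h2) (lt_irrefl _)
  rw [hks, show σ.symm r = k by rw [← hσk, Equiv.symm_apply_apply]]

end Run

theorem aux_stmt15 (n i : ℕ) (hn : 2 ≤ n) (h1 : 1 ≤ i) (h2 : i < n) :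
    (Finset.univ.filter fun π : Equiv.Perm (Fin n) =>
      ∃ j : Fin n,
        greedyMatchU (monoAdj n) (fun v => π v) (j : ℕ) = some (π.symm ⟨i - 1, Nat.lt_of_le_of_lt (Nat.sub_le i 1) h2⟩) ∧
        π.symm ⟨i, h2⟩ = j).card =
      (Finset.univ.filter fun σ : Equiv.Perm (Fin (n - 1)) =>
        ∃ v : Fin (n - 1), (σ v : ℕ) = i - 1 ∧
          v ∈ greedyRun (monoAdj (n - 1)) (fun u => σ u) (n - 1)).card := by
  obtain ⟨m, rfl⟩ : ∃ m, n = m + 1 := ⟨n - 1, by omega⟩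
  simp only [Nat.add_sub_cancel]
  have him : i - 1 < m := by omega
  set iF : Fin (m + 1) := ⟨i, h2⟩ with hiF
  set r : Fin m := ⟨i - 1, him⟩ with hr
  have hlt : Fin.castSucc r < iF := by
    rw [Fin.lt_def]
    show i - 1 < i
    omega
  have hcast : (Fin.castSucc r : Fin (m + 1)) = ⟨i - 1, by omega⟩ := rfl
  -- existence of the matching step
  have HEX : ∀ σ : Equiv.Perm (Fin m),
      (∃ v : Fin m, (σ v : ℕ) = i - 1 ∧
        v ∈ greedyRun (monoAdj m) (fun u => σ u) m) →
      ∃ s, greedyMatchU (monoAdj m) (fun u => σ u) s = some (σ.symm r) := by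
    rintro σ ⟨v, hv1, hv2⟩
    have hvr : v = σ.symm r := by
      rw [Equiv.eq_symm_apply]
      exact Fin.ext (by simpa using hv1)
    rw [hvr] at hv2
    obtain ⟨s, _, hs⟩ := exists_matchU hv2
    exact ⟨s, hs⟩
  have HBND : ∀ (σ : Equiv.Perm (Fin m))
      (hσ : ∃ s, greedyMatchU (monoAdj m) (fun u => σ u) s = some (σ.symm r)),
      Nat.find hσ < m + 1 := by
    intro σ hσ
    have hs := Nat.find_spec hσ
    have h3 : Nat.find hσ ≤ ((σ.symm r : Fin m) : ℕ) := (matchU_spec hs).1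
    have h4 : ((σ.symm r : Fin m) : ℕ) < m := (σ.symm r).isLt
    omega
  -- the key fact extracted from membership on the π side
  have KEY : ∀ π : Equiv.Perm (Fin (m + 1)),
      (∃ j : Fin (m + 1),
        greedyMatchU (monoAdj (m + 1)) (fun v => π v) (j : ℕ) =
            some (π.symm ⟨i - 1, by omega⟩) ∧ π.symm iF = j) →
      greedyMatchU (monoAdj m) (fun u => delP π iF u) ((π.symm iF : Fin (m + 1)) : ℕ) =
        some ((delP π iF).symm r) := by
    rintro π ⟨j, hj1, hj2⟩
    rw [← hj2] at hj1
    have hmk : mkP (delP π iF) (π.symm iF) iF = π := mkP_delP π iF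
    have hm : greedyMatchU (monoAdj (m + 1))
        (fun u => mkP (delP π iF) (π.symm iF) iF u) ((π.symm iF : Fin (m + 1)) : ℕ) =
        some (π.symm ⟨i - 1, by omega⟩) := by
      rw [hmk]; exact hj1
    have hv : mkP (delP π iF) (π.symm iF) iF (π.symm ⟨i - 1, by omega⟩) = Fin.castSucc r := by
      rw [hmk, Equiv.apply_symm_apply]
      exact hcast.symm
    exact backward_F hlt hm hv
  refine Finset.card_bij' (fun π _ => delP π iF)
    (fun σ hσ => mkP σ ⟨Nat.find (HEX σ (Finset.mem_filter.mp hσ).2),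
      HBND σ (HEX σ (Finset.mem_filter.mp hσ).2)⟩ iF) ?hi ?hj ?left ?right
  case hi =>
    intro π hπ
    have hkey := KEY π (Finset.mem_filter.mp hπ).2
    rw [Finset.mem_filter]
    refine ⟨Finset.mem_univ _, (delP π iF).symm r, ?_, ?_⟩
    · show ((delP π iF) ((delP π iF).symm r) : ℕ) = i - 1
      rw [Equiv.apply_symm_apply]
    · have h5 := matchU_spec hkey
      have h6 : (delP π iF).symm r ∈ greedyRun (monoAdj m) (fun u => delP π iF u)
          (((π.symm iF : Fin (m + 1)) : ℕ) + 1) :=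
        greedyRun_succ_some hkey ▸ Finset.mem_insert_self _ _
      have h7 : ((π.symm iF : Fin (m + 1)) : ℕ) ≤ (((delP π iF).symm r : Fin m) : ℕ) := h5.1
      have h8 : (((delP π iF).symm r : Fin m) : ℕ) < m := ((delP π iF).symm r).isLt
      exact greedyRun_mono (by omega) h6
  case hj =>
    intro σ hσ
    have hex := (Finset.mem_filter.mp hσ).2
    have hw := Nat.find_spec (HEX σ hex)
    set jF : Fin (m + 1) := ⟨Nat.find (HEX σ hex), HBND σ (HEX σ hex)⟩ with hjF
    have hlt2 : Fin.castSucc (σ (σ.symm r)) < iF := by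
      rw [Equiv.apply_symm_apply]; exact hlt
    have hfg : greedyMatchU (monoAdj (m + 1)) (fun v => mkP σ jF iF v) ((jF : Fin (m+1)) : ℕ)
        = some (jF.succAbove (σ.symm r)) := forward_G hw hlt2
    rw [Finset.mem_filter]
    refine ⟨Finset.mem_univ _, jF, ?_, mkP_symm_iF σ jF iF⟩
    have h9 : (mkP σ jF iF).symm ⟨i - 1, by omega⟩ = jF.succAbove (σ.symm r) := by
      rw [Equiv.symm_apply_eq, mkP_apply_succAbove, Equiv.apply_symm_apply,
        Fin.succAbove_of_castSucc_lt _ _ hlt]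
      exact hcast.symm
    show greedyMatchU (monoAdj (m + 1)) (fun v => mkP σ jF iF v) ((jF : Fin (m + 1)) : ℕ) =
      some ((mkP σ jF iF).symm ⟨i - 1, by omega⟩)
    rw [h9]
    exact hfg
  case left =>
    intro π hπ
    have hkey := KEY π (Finset.mem_filter.mp hπ).2
    have huniq : ∀ (hx : ∃ s, greedyMatchU (monoAdj m) (fun u => delP π iF u) s =
        some ((delP π iF).symm r)),
        (⟨Nat.find hx, HBND _ hx⟩ : Fin (m + 1)) = π.symm iF :=
      fun hx => Fin.ext (matchU_unique (Nat.find_spec hx) hkey)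
    show mkP (delP π iF) _ iF = π
    rw [huniq _]
    exact mkP_delP π iF
  case right =>
    intro σ hσ
    exact delP_mkP σ _ iF

/-- Fix `n ≥ 2` and `1 ≤ i < n` (1-indexed ranks). The number of permutations `π̂` of
`{1,…,n}` such that, under the Ranking greedy process on `MonotoneG` with `π̂`, the
vertex of rank `i` is matched, say to `u_j`, and the vertex of rank `i+1` under `π̂` is
`v_j` (for that same index `j`), equals `a(n−1, i)`. -/
theorem stmt_15 (n i : ℕ) (hn : 2 ≤ n) (h1 : 1 ≤ i) (h2 : i < n) :
    (Finset.univ.filter fun π : Equiv.Perm (Fin n) =>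
      ∃ j : Fin n,
        greedyMatchU (monoAdj n) (fun v => π v) (j : ℕ) = some (π.symm ⟨i - 1, by omega⟩) ∧
        π.symm ⟨i, h2⟩ = j).card = aIdx (n - 1) i := by
  exact aux_stmt15 n i hn h1 h2
end
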